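/- (Claim in the proof of Proposition 6.7, for the GL_n coweight lattice.) Let n ≥ 2 and 1 ≤ k ≤ n−1. Let λ ∈ ℤⁿ have entries λ_i = −1 for i ≤ k and λ_i = 0 for i > k, and let α^∨ = e_k − e_{k+1}. Then for every antidominant μ ∈ ℤⁿ (i.e. μ_1 ≤ ⋯ ≤ μ_n): μ ≥ 2λ if and only if μ = 2λ or μ ≥ 2λ + α^∨. -/

import Mathlib

/-- The simple coroot `e_i - e_{i+1}` (0-indexed) of `GL_n`, as a vector in `ℤⁿ`. -/
def simpleCoroot (n i : ℕ) : Fin n → ℤ :=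
  fun j => if (j : ℕ) = i then 1 else if (j : ℕ) = i + 1 then -1 else 0

/-- `μ ≥ lam`: `μ - lam` is a nonnegative integer linear combination of the simple
coroots `e_i - e_{i+1}`, `0 ≤ i ≤ n - 2` (0-indexed). -/
def CorootGE {n : ℕ} (μ lam : Fin n → ℤ) : Prop :=
  ∃ c : ℕ → ℕ, ∀ j : Fin n,
    μ j - lam j = ∑ i ∈ Finset.range (n - 1), (c i : ℤ) * simpleCoroot n i j

/-- Evaluation of a linear combination of simple coroots at a coordinate. -/
lemma coroot_sum {n : ℕ} (c : ℕ → ℤ) (j : Fin n) :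
    ∑ i ∈ Finset.range (n - 1), c i * simpleCoroot n i j
      = (if (j : ℕ) < n - 1 then c j else 0)
        - (if 0 < (j : ℕ) then c ((j : ℕ) - 1) else 0) := by
  have hterm : ∀ i, c i * simpleCoroot n i j
      = (if (j : ℕ) = i then c i else 0) - (if (j : ℕ) = i + 1 then c i else 0) := by
    intro i
    unfold simpleCoroot
    by_cases h1 : (j : ℕ) = i <;> by_cases h2 : (j : ℕ) = i + 1 <;>
      simp [h1, h2]
  simp only [hterm, Finset.sum_sub_distrib]
  congr 1
  · simp [Finset.sum_ite_eq, Finset.mem_range]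
  · rcases Nat.eq_zero_or_eq_succ_pred (j : ℕ) with h | h
    · simp [h]
    · rw [h]
      have hjn : (j : ℕ) - 1 < n - 1 := by
        have := j.isLt; omega
      simp only [Nat.succ_eq_add_one, Nat.add_left_inj]
      rw [Finset.sum_ite_eq]
      simp [hjn]

/-- Arithmetic for decreasing the coefficient of the `(k-1)`-st coroot by one. -/
lemma adjust_down (n k : ℕ) (hn : 2 ≤ n) (hk1 : 1 ≤ k) (hk2 : k ≤ n - 1)
    (c : ℕ → ℕ) (hc1 : 1 ≤ c (k - 1)) (m : ℕ) (hm : m < n) (x a : ℤ)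
    (h1 : x - a = (if m < n - 1 then (c m : ℤ) else 0)
      - (if 0 < m then (c (m - 1) : ℤ) else 0)) :
    x - (a + (if m = k - 1 then (1 : ℤ) else if m = k then -1 else 0))
      = (if m < n - 1 then ((if m = k - 1 then c m - 1 else c m : ℕ) : ℤ) else 0)
        - (if 0 < m then ((if m - 1 = k - 1 then c (m - 1) - 1 else c (m - 1) : ℕ) : ℤ)
            else 0) := by
  by_cases e1 : m = k - 1
  · subst e1
    split_ifs at h1 ⊢ <;> omega
  · by_cases e2 : m = k
    · subst e2
      split_ifs at h1 ⊢ <;> omega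
    · split_ifs at h1 ⊢ <;> omega

/-- Arithmetic for increasing the coefficient of the `(k-1)`-st coroot by one. -/
lemma adjust_up (n k : ℕ) (hn : 2 ≤ n) (hk1 : 1 ≤ k) (hk2 : k ≤ n - 1)
    (c : ℕ → ℕ) (m : ℕ) (hm : m < n) (x a : ℤ)
    (h1 : x - (a + (if m = k - 1 then (1 : ℤ) else if m = k then -1 else 0))
      = (if m < n - 1 then (c m : ℤ) else 0)
      - (if 0 < m then (c (m - 1) : ℤ) else 0)) :
    x - a = (if m < n - 1 then ((if m = k - 1 then c m + 1 else c m : ℕ) : ℤ) else 0)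
        - (if 0 < m then ((if m - 1 = k - 1 then c (m - 1) + 1 else c (m - 1) : ℕ) : ℤ)
            else 0) := by
  by_cases e1 : m = k - 1
  · subst e1
    split_ifs at h1 ⊢ <;> omega
  · by_cases e2 : m = k
    · subst e2
      split_ifs at h1 ⊢ <;> omega
    · split_ifs at h1 ⊢ <;> omega

set_option maxHeartbeats 1000000 in
/-- If the coefficient of the `(k-1)`-st coroot is zero, then an antidominant `μ ≥ 2λ`
must equal `2λ`. -/
lemma hard_case (n k : ℕ) (hn : 2 ≤ n) (hk1 : 1 ≤ k) (hk2 : k ≤ n - 1)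
    (lam : Fin n → ℤ) (hlam : ∀ j : Fin n, lam j = if (j : ℕ) < k then -1 else 0)
    (μ : Fin n → ℤ) (hμ : Monotone μ) (c : ℕ → ℕ)
    (hc' : ∀ j : Fin n, μ j - 2 * lam j
        = (if (j : ℕ) < n - 1 then (c (j : ℕ) : ℤ) else 0)
          - (if 0 < (j : ℕ) then (c ((j : ℕ) - 1) : ℤ) else 0))
    (h0 : c (k - 1) = 0) :
    μ = (fun j => 2 * lam j) := by
  have hkn : k < n := by omega
  -- extend μ to an ℕ-indexed sequence
  obtain ⟨u, hu⟩ : ∃ u : ℕ → ℤ, ∀ (m : ℕ) (hm : m < n), u m = μ ⟨m, hm⟩ :=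
    ⟨fun m => if hm : m < n then μ ⟨m, hm⟩ else 0, fun m hm => by simp [hm]⟩
  have humono : ∀ a b : ℕ, a ≤ b → b < n → u a ≤ u b := by
    intro a b hab hb
    rw [hu a (lt_of_le_of_lt hab hb), hu b hb]
    exact hμ (Fin.mk_le_mk.mpr hab)
  obtain ⟨g, hgdef⟩ : ∃ g : ℕ → ℤ, ∀ m : ℕ, g m = u m - (if m < k then -2 else 0) :=
    ⟨_, fun _ => rfl⟩
  have hgrec : ∀ m : ℕ, m < n →
      g m = (if m < n - 1 then (c m : ℤ) else 0)
        - (if 0 < m then (c (m - 1) : ℤ) else 0) := by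
    intro m hm
    have h := hc' ⟨m, hm⟩
    rw [hlam ⟨m, hm⟩] at h
    simp only [Fin.val_mk] at h
    rw [hgdef m, hu m hm]
    split_ifs at h ⊢ <;> omega
  have hpartial : ∀ m, m < n → ∑ j ∈ Finset.range (m + 1), g j
      = (if m < n - 1 then (c m : ℤ) else 0) := by
    intro m
    induction m with
    | zero =>
      intro hm
      rw [Finset.sum_range_one, hgrec 0 hm]
      simp
    | succ m ih =>
      intro hm
      rw [Finset.sum_range_succ, ih (by omega), hgrec (m + 1) hm]
      have h1 : m < n - 1 := by omega
      have h2 : 0 < m + 1 := by omega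
      rw [if_pos h1, if_pos h2]
      have h3 : m + 1 - 1 = m := by omega
      rw [h3]
      ring
  have hSnonneg : ∀ m, m ≤ n → 0 ≤ ∑ j ∈ Finset.range m, g j := by
    intro m hm
    cases m with
    | zero => simp
    | succ m' =>
      rw [hpartial m' (by omega)]
      split_ifs
      · exact Int.natCast_nonneg _
      · exact le_refl 0
  have htot : ∑ j ∈ Finset.range n, g j = 0 := by
    have h1 : n - 1 + 1 = n := by omega
    have := hpartial (n - 1) (by omega)
    rw [h1] at this
    rw [this, if_neg (by omega : ¬ (n - 1 < n - 1))]
  have hk0 : ∑ j ∈ Finset.range k, g j = 0 := by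
    have h1 : k - 1 + 1 = k := by omega
    have := hpartial (k - 1) (by omega)
    rw [h1] at this
    rw [this, if_pos (by omega : k - 1 < n - 1), h0]
    simp
  -- the last entry of u is ≤ 0, hence all are
  have hlastle : u (n - 1) ≤ 0 := by
    have hsplit := Finset.sum_range_succ g (n - 1)
    have h1 : n - 1 + 1 = n := by omega
    rw [h1] at hsplit
    have h2 := hSnonneg (n - 1) (by omega)
    have h3 : g (n - 1) ≤ 0 := by omega
    rw [hgdef (n - 1), if_neg (by omega : ¬ (n - 1 < k))] at h3
    omega
  have hule : ∀ m : ℕ, m < n → u m ≤ 0 := by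
    intro m hm
    exact le_trans (humono m (n - 1) (by omega) (by omega)) hlastle
  -- entries ≥ k are 0
  have hIco : ∑ j ∈ Finset.Ico k n, g j = 0 := by
    have hsum := Finset.sum_Ico_consecutive g (Nat.zero_le k) (le_of_lt hkn)
    rw [← Finset.range_eq_Ico, ← Finset.range_eq_Ico] at hsum
    rw [htot, hk0] at hsum
    omega
  have hupper : ∀ m : ℕ, m < n → k ≤ m → u m = 0 := by
    intro m hm hkm
    have hnp : ∀ j ∈ Finset.Ico k n, g j ≤ 0 := by
      intro j hj
      rw [Finset.mem_Ico] at hj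
      rw [hgdef j, if_neg (by omega : ¬ (j < k))]
      have := hule j hj.2
      omega
    have := (Finset.sum_eq_zero_iff_of_nonpos hnp).mp hIco m
      (Finset.mem_Ico.mpr ⟨hkm, hm⟩)
    rw [hgdef m, if_neg (by omega : ¬ (m < k))] at this
    omega
  -- entry k-1 is ≤ -2, hence entries < k are all -2
  have hkm1 : u (k - 1) ≤ -2 := by
    have hsplit := Finset.sum_range_succ g (k - 1)
    have h1 : k - 1 + 1 = k := by omega
    rw [h1] at hsplit
    have h2 := hSnonneg (k - 1) (by omega)
    have h3 : g (k - 1) ≤ 0 := by omega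
    rw [hgdef (k - 1), if_pos (by omega : k - 1 < k)] at h3
    omega
  have hlower : ∀ m : ℕ, m < n → m < k → u m = -2 := by
    intro m hm hmk
    have hnp : ∀ j ∈ Finset.range k, g j ≤ 0 := by
      intro j hj
      rw [Finset.mem_range] at hj
      rw [hgdef j, if_pos hj]
      have hle := humono j (k - 1) (by omega) (by omega)
      omega
    have := (Finset.sum_eq_zero_iff_of_nonpos hnp).mp hk0 m
      (Finset.mem_range.mpr hmk)
    rw [hgdef m, if_pos hmk] at this
    omega
  funext j
  have hjv : u (j : ℕ) = μ j := hu (j : ℕ) j.isLt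
  rw [hlam j]
  by_cases h : (j : ℕ) < k
  · have h2 := hlower (j : ℕ) j.isLt h
    rw [if_pos h]
    omega
  · have h2 := hupper (j : ℕ) j.isLt (by omega)
    rw [if_neg h]
    omega

set_option maxHeartbeats 1000000 in
/-- claim in the proof of Proposition 6.7, for the `GL_n` coweight
lattice: with `λ` having entries `-1` in the first `k` positions (1-indexed: `i ≤ k`)
and `0` after, and `α^∨ = e_k - e_{k+1}` (1-indexed), for every antidominant `μ`:
`μ ≥ 2λ ↔ μ = 2λ ∨ μ ≥ 2λ + α^∨`. -/
theorem statement12 (n k : ℕ) (hn : 2 ≤ n) (hk1 : 1 ≤ k) (hk2 : k ≤ n - 1)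
    (lam : Fin n → ℤ) (hlam : ∀ j : Fin n, lam j = if (j : ℕ) < k then -1 else 0)
    (av : Fin n → ℤ)
    (hav : ∀ j : Fin n, av j = if (j : ℕ) = k - 1 then 1 else if (j : ℕ) = k then -1 else 0)
    (μ : Fin n → ℤ) (hμ : Monotone μ) :
    CorootGE μ (fun j => 2 * lam j) ↔
      μ = (fun j => 2 * lam j) ∨ CorootGE μ (fun j => 2 * lam j + av j) := by
  constructor
  · rintro ⟨c, hc⟩
    have hc' : ∀ j : Fin n, μ j - 2 * lam j
        = (if (j : ℕ) < n - 1 then (c (j : ℕ) : ℤ) else 0)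
          - (if 0 < (j : ℕ) then (c ((j : ℕ) - 1) : ℤ) else 0) := by
      intro j
      have := hc j
      rwa [coroot_sum (fun i => (c i : ℤ))] at this
    by_cases h0 : c (k - 1) = 0
    · exact Or.inl (hard_case n k hn hk1 hk2 lam hlam μ hμ c hc' h0)
    · right
      have hc1 : 1 ≤ c (k - 1) := Nat.one_le_iff_ne_zero.mpr h0
      refine ⟨fun i => if i = k - 1 then c i - 1 else c i, fun j => ?_⟩
      beta_reduce
      rw [coroot_sum (fun i => ((if i = k - 1 then c i - 1 else c i : ℕ) : ℤ)), hav]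
      exact adjust_down n k hn hk1 hk2 c hc1 (j : ℕ) j.isLt (μ j) (2 * lam j) (hc' j)
  · rintro (h | ⟨c, hc⟩)
    · refine ⟨fun _ => 0, fun j => ?_⟩
      simp [h]
    · refine ⟨fun i => if i = k - 1 then c i + 1 else c i, fun j => ?_⟩
      have h1 := hc j
      beta_reduce at h1
      rw [coroot_sum (fun i => (c i : ℤ)), hav] at h1
      beta_reduce
      rw [coroot_sum (fun i => ((if i = k - 1 then c i + 1 else c i : ℕ) : ℤ))]
      exact adjust_up n k hn hk1 hk2 c (j : ℕ) j.isLt (μ j) (2 * lam j) h1
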